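/- Infusion and reverse infusion are mutually inverse: for standard tableaux T of straight shape λ and U of skew shape ν/λ, revinfusion(infusion(T,U)) = (T,U) and infusion(revinfusion(T,U)) = (T,U). -/

import Mathlib

open scoped Classical

noncomputable section

variable {Λ : Type} [Fintype Λ] [PartialOrder Λ]

/-- The set of boxes occupied by a (partial) filling. -/
def shape (T : Λ → Option ℕ) : Finset Λ :=
  Finset.univ.filter fun x => (T x).isSome

/-- Lower order ideal (straight shape). -/
def IsLowerIdeal (S : Finset Λ) : Prop := ∀ x ∈ S, ∀ y, y ≤ x → y ∈ S

/-- `T` is a standard filling of a skew shape: its domain is a difference of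
nested lower order ideals, its labels are exactly `1,…,m` each used once, and
labels strictly increase along the order of `Λ`. -/
def IsStandard (T : Λ → Option ℕ) : Prop :=
  (∃ lam : Finset Λ, IsLowerIdeal lam ∧ Disjoint lam (shape T) ∧
    IsLowerIdeal (lam ∪ shape T)) ∧
  (∀ i : ℕ, 1 ≤ i → i ≤ (shape T).card → ∃! x : Λ, T x = some i) ∧
  (∀ x ∈ shape T, ∃ i : ℕ, T x = some i ∧ 1 ≤ i ∧ i ≤ (shape T).card) ∧
  (∀ x y : Λ, x ∈ shape T → y ∈ shape T → x < y →
    ∀ i j : ℕ, T x = some i → T y = some j → i < j)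

def lab (T : Λ → Option ℕ) (x : Λ) : ℕ := (T x).getD 0

def pickMinBy (f : Λ → ℕ) (s : Finset Λ) (h : s.Nonempty) : Λ :=
  (Finset.exists_min_image s f h).choose

def pickMaxBy (f : Λ → ℕ) (s : Finset Λ) (h : s.Nonempty) : Λ :=
  (Finset.exists_max_image s f h).choose

/-- One full jeu de taquin slide into the vacant box `x`: repeatedly move into the
vacancy the smallest label among the boxes covering it. -/
def slideAux : ℕ → (Λ → Option ℕ) → Λ → (Λ → Option ℕ)
  | 0, T, _ => T
  | n+1, T, x =>
    let cands := (shape T).filter fun y => x ⋖ y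
    if h : cands.Nonempty then
      let y := pickMinBy (lab T) cands h
      slideAux n (fun z => if z = x then T y else if z = y then none else T z) y
    else T

/-- One full reverse jeu de taquin slide into the vacant box `x`: repeatedly move
into the vacancy the largest label among the boxes it covers. -/
def revSlideAux : ℕ → (Λ → Option ℕ) → Λ → (Λ → Option ℕ)
  | 0, T, _ => T
  | n+1, T, x =>
    let cands := (shape T).filter fun y => y ⋖ x
    if h : cands.Nonempty then
      let y := pickMaxBy (lab T) cands h
      revSlideAux n (fun z => if z = x then T y else if z = y then none else T z) y
    else T

/-- `x` is an admissible box for an (inner) jeu de taquin slide on `T`: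
vacant, below some box of `T`, and maximal such. -/
def InnerAdmissible (T : Λ → Option ℕ) (x : Λ) : Prop :=
  T x = none ∧ (∃ y ∈ shape T, x < y) ∧
  ∀ z : Λ, T z = none → (∃ y ∈ shape T, z < y) → ¬ x < z

/-- `x` is an admissible box for a reverse jeu de taquin slide on `T`:
vacant, above some box of `T`, and minimal such. -/
def OuterAdmissible (T : Λ → Option ℕ) (x : Λ) : Prop :=
  T x = none ∧ (∃ y ∈ shape T, y < x) ∧
  ∀ z : Λ, T z = none → (∃ y ∈ shape T, y < z) → ¬ z < x

def jdt (x : Λ) (T : Λ → Option ℕ) : Λ → Option ℕ :=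
  if InnerAdmissible T x then slideAux (Fintype.card Λ) T x else T

def revjdt (x : Λ) (T : Λ → Option ℕ) : Λ → Option ℕ :=
  if OuterAdmissible T x then revSlideAux (Fintype.card Λ) T x else T

/-- Apply a sequence of slides (`true`) and reverse slides (`false`) at the
given boxes. -/
def applySeq (s : List (Bool × Λ)) (T : Λ → Option ℕ) : Λ → Option ℕ :=
  s.foldl (fun T p => if p.1 then jdt p.2 T else revjdt p.2 T) T

/-- Dual equivalence: same shape, and every common sequence of slides and
reverse slides produces tableaux of the same shape. -/
def DualEquiv (T U : Λ → Option ℕ) : Prop :=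
  shape T = shape U ∧
  ∀ s : List (Bool × Λ), shape (applySeq s T) = shape (applySeq s U)

/-- `mu` extends `lam`: `lam ∪ mu` is a straight shape containing `lam` and `mu`
as complementary down-closed and up-closed subsets. -/
def ShapeExtends (mu lam : Finset Λ) : Prop :=
  Disjoint lam mu ∧ IsLowerIdeal (lam ∪ mu) ∧
  (∀ x ∈ lam, ∀ y ∈ lam ∪ mu, y ≤ x → y ∈ lam) ∧
  (∀ x ∈ mu, ∀ y ∈ lam ∪ mu, x ≤ y → y ∈ mu)

/-- `A ⨿ B`: keep the labels of `A` and shift the labels of `B` up by `|shape A|`. -/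
def tabConcat (A B : Λ → Option ℕ) : Λ → Option ℕ := fun x =>
  match A x with
  | some i => some i
  | none => (B x).map (· + (shape A).card)

/-- One step of infusion on a triple `(T, U, V)`: remove the largest label of `T`
at its box `x`, slide `U` into `x`, and record the removed label at the vacated
hole in `V`. -/
def infusionStep :
    ((Λ → Option ℕ) × (Λ → Option ℕ) × (Λ → Option ℕ)) →
    ((Λ → Option ℕ) × (Λ → Option ℕ) × (Λ → Option ℕ)) := fun p =>
  let T := p.1; let U := p.2.1; let V := p.2.2
  if h : (shape T).Nonempty then
    let x := pickMaxBy (lab T) (shape T) h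
    let T' := fun z => if z = x then none else T z
    let U' := slideAux (Fintype.card Λ) U x
    let hole := if h2 : (shape U \ shape U').Nonempty then h2.choose else x
    let V' := fun z => if z = hole then T x else V z
    (T', U', V')
  else p

/-- `infusion (T,U)` for `U` extending `T`: slide `U` through the boxes of `T` in
decreasing label order; first output is the slid `U`, second records `T`'s labels
in the vacated holes. -/
def infusion (T U : Λ → Option ℕ) : (Λ → Option ℕ) × (Λ → Option ℕ) :=
  let r := infusionStep^[Fintype.card Λ] (T, U, fun _ => none)
  (r.2.1, r.2.2)

/-- One step of reverse infusion: remove the smallest label of `U` at its box `x`,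
reverse-slide `T` into `x`, and record the removed label at the vacated hole. -/
def revinfusionStep :
    ((Λ → Option ℕ) × (Λ → Option ℕ) × (Λ → Option ℕ)) →
    ((Λ → Option ℕ) × (Λ → Option ℕ) × (Λ → Option ℕ)) := fun p =>
  let T := p.1; let U := p.2.1; let V := p.2.2
  if h : (shape U).Nonempty then
    let x := pickMinBy (lab U) (shape U) h
    let U' := fun z => if z = x then none else U z
    let T' := revSlideAux (Fintype.card Λ) T x
    let hole := if h2 : (shape T \ shape T').Nonempty then h2.choose else x
    let V' := fun z => if z = hole then U x else V z
    (T', U', V')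
  else p

/-- `revinfusion (T,U)`: reverse-slide `T` through the boxes of `U` in increasing
label order; first output records `U`'s labels in the vacated holes (a straight
tableau), second is the migrated `T`. -/
def revinfusion (T U : Λ → Option ℕ) : (Λ → Option ℕ) × (Λ → Option ℕ) :=
  let r := revinfusionStep^[Fintype.card Λ] (T, U, fun _ => none)
  (r.2.2, r.1)

def applyJdtSeq (l : List Λ) (T : Λ → Option ℕ) : Λ → Option ℕ :=
  l.foldl (fun T x => jdt x T) T

/-- `V` is a rectification of `T`: obtained from `T` by jeu de taquin slides and of
straight shape. -/
def IsRectificationOf (V T : Λ → Option ℕ) : Prop :=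
  (∃ l : List Λ, applyJdtSeq l T = V) ∧ IsLowerIdeal (shape V)

/-- The rectification of `T` (any choice of rectifying slide sequence). -/
def rect (T : Λ → Option ℕ) : Λ → Option ℕ :=
  if h : ∃ l : List Λ, IsLowerIdeal (shape (applyJdtSeq l T)) then
    applyJdtSeq h.choose T else T

/-- Sch\"utzenberger's `Δ`: delete the entry `1` at the minimum `b`, decrease all
labels by one, and slide into `b`. -/
def delta (b : Λ) (T : Λ → Option ℕ) : Λ → Option ℕ :=
  slideAux (Fintype.card Λ) (fun x => if x = b then none else (T x).map (· - 1)) b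

/-- Evacuation: the label of `x` is `|λ|+1-i` where `x ∈ shape (Δ^[i-1] T) \ shape (Δ^[i] T)`. -/
def evac (b : Λ) (T : Λ → Option ℕ) : Λ → Option ℕ := fun x =>
  if x ∈ shape T then
    some ((shape T).card + 1 -
      ((Finset.range (shape T).card).filter fun j => x ∈ shape ((delta b)^[j] T)).card)
  else none

/-- The shapes lying one box above `γ` and inside `β`. -/
def Between (γ β : Finset Λ) : Set (Finset Λ) :=
  {ε | IsLowerIdeal ε ∧ γ ⊆ ε ∧ ε ⊆ β ∧ ε.card = γ.card + 1}

/-- The local growth rule for a 2×2 square with corners `α` (top-left), `β`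
(top-right), `γ` (bottom-left), `δ` (bottom-right). -/
def LocalRule (α β γ δ : Finset Λ) : Prop :=
  δ ∈ Between γ β ∧ (δ = α ↔ Between γ β = {α})

/-- A `(p+1) × (q+1)` growth diagram (rows indexed from the top). -/
def IsGrowthDiagram (p q : ℕ) (g : ℕ → ℕ → Finset Λ) : Prop :=
  (∀ i j, i ≤ p → j ≤ q → IsLowerIdeal (g i j)) ∧
  (∀ i j, i ≤ p → j < q → g i j ⊆ g i (j+1) ∧ (g i (j+1)).card = (g i j).card + 1) ∧
  (∀ i j, i < p → j ≤ q → g (i+1) j ⊆ g i j ∧ (g i j).card = (g (i+1) j).card + 1) ∧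
  (∀ i j, i < p → j < q → LocalRule (g i j) (g i (j+1)) (g (i+1) j) (g (i+1) (j+1)))

/-- The tableau of shape `{x₁,…,x_p}` encoding a slide sequence: `x_i` gets label `p+1-i`. -/
def encodeTab (l : List Λ) : Λ → Option ℕ := fun x =>
  if x ∈ l then some (l.length - l.findIdx (fun y => decide (y = x))) else none

end


set_option linter.unusedSectionVars false
noncomputable section
variable {Λ : Type} [Fintype Λ] [PartialOrder Λ]

lemma mem_shape {T : Λ → Option ℕ} {x : Λ} : x ∈ shape T ↔ (T x).isSome := by
  simp [shape]

lemma shape_some {T : Λ → Option ℕ} {x : Λ} (h : x ∈ shape T) : T x = some (lab T x) := by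
  rw [mem_shape] at h
  rcases Option.isSome_iff_exists.1 h with ⟨i, hi⟩
  simp [lab, hi]

lemma not_mem_shape {T : Λ → Option ℕ} {x : Λ} : x ∉ shape T ↔ T x = none := by
  rw [mem_shape]
  cases h : T x <;> simp

lemma mem_shape_of_eq {T : Λ → Option ℕ} {x : Λ} {i : ℕ} (h : T x = some i) : x ∈ shape T := by
  rw [mem_shape, h]; rfl

lemma lab_eq {T : Λ → Option ℕ} {x : Λ} {i : ℕ} (h : T x = some i) : lab T x = i := by
  simp [lab, h]

lemma pickMinBy_mem (f : Λ → ℕ) (s : Finset Λ) (h : s.Nonempty) : pickMinBy f s h ∈ s :=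
  (Finset.exists_min_image s f h).choose_spec.1

lemma pickMinBy_le (f : Λ → ℕ) (s : Finset Λ) (h : s.Nonempty) :
    ∀ b ∈ s, f (pickMinBy f s h) ≤ f b :=
  (Finset.exists_min_image s f h).choose_spec.2

lemma pickMaxBy_mem (f : Λ → ℕ) (s : Finset Λ) (h : s.Nonempty) : pickMaxBy f s h ∈ s :=
  (Finset.exists_max_image s f h).choose_spec.1

lemma pickMaxBy_ge (f : Λ → ℕ) (s : Finset Λ) (h : s.Nonempty) :
    ∀ b ∈ s, f b ≤ f (pickMaxBy f s h) :=
  (Finset.exists_max_image s f h).choose_spec.2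

lemma exists_covBy_le {a b : Λ} (h : a < b) : ∃ c, a ⋖ c ∧ c ≤ b := by
  classical
  have hne : (Finset.univ.filter fun c => a < c ∧ c ≤ b).Nonempty :=
    ⟨b, by simp [h]⟩
  obtain ⟨c, hc, hmin⟩ : ∃ m ∈ (Finset.univ.filter fun c => a < c ∧ c ≤ b),
      ∀ x ∈ (Finset.univ.filter fun c => a < c ∧ c ≤ b), ¬x < m := by
    obtain ⟨m, hm⟩ := Finset.exists_minimal hne
    exact ⟨m, hm.prop, fun x hx hlt => hm.not_lt hx hlt⟩
  simp only [Finset.mem_filter, Finset.mem_univ, true_and] at hc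
  refine ⟨c, ⟨hc.1, fun d hd1 hd2 => ?_⟩, hc.2⟩
  exact hmin d (by simp [hd1, le_of_lt (lt_of_lt_of_le hd2 (le_refl c)) |>.trans hc.2]) hd2

/-- The elementary move: put the label of `y` at the vacancy `v`, vacate `y`. -/
def swapTab (v y : Λ) (U : Λ → Option ℕ) : Λ → Option ℕ :=
  fun z => if z = v then U y else if z = y then none else U z

lemma shape_swapTab {v y : Λ} {U : Λ → Option ℕ} (hv : U v = none) (hy : y ∈ shape U) :
    shape (swapTab v y U) = insert v (shape U) \ {y} := by
  have hvy : v ≠ y := by rintro rfl; simp [mem_shape, hv] at hy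
  ext z
  by_cases h1 : z = v
  · subst h1
    simp [mem_shape, swapTab, shape_some hy, hvy]
  · by_cases h2 : z = y
    · subst h2
      simp [mem_shape, swapTab, h1, Ne.symm hvy]
    · simp [mem_shape, swapTab, h1, h2]

def Inc (U : Λ → Option ℕ) : Prop :=
  ∀ a b, a ∈ shape U → b ∈ shape U → a < b → lab U a < lab U b

def Inj (U : Λ → Option ℕ) : Prop :=
  ∀ a b, a ∈ shape U → b ∈ shape U → lab U a = lab U b → a = b

def LabelSet (U : Λ → Option ℕ) (n : ℕ) : Prop :=
  (shape U).card = n ∧ (∀ i, 1 ≤ i → i ≤ n → ∃! x, U x = some i) ∧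
    ∀ x ∈ shape U, 1 ≤ lab U x ∧ lab U x ≤ n

lemma LabelSet.inj {U : Λ → Option ℕ} {n : ℕ} (h : LabelSet U n) : Inj U := by
  intro a b ha hb hl
  have h1 := shape_some ha
  have h2 := shape_some hb
  obtain ⟨x, -, hx⟩ := h.2.1 (lab U a) (h.2.2 a ha).1 (h.2.2 a ha).2
  exact (hx a h1).trans (hx b (by show U b = _; rw [h2, hl])).symm

def applyPath : Λ → List Λ → (Λ → Option ℕ) → (Λ → Option ℕ)
  | _, [], U => U
  | x, y :: p, U => applyPath y p (swapTab x y U)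

def chainPath : ℕ → (Λ → Option ℕ) → Λ → List Λ
  | 0, _, _ => []
  | n+1, U, x =>
    if h : ((shape U).filter fun y => x ⋖ y).Nonempty then
      pickMinBy (lab U) _ h ::
        chainPath n (swapTab x (pickMinBy (lab U) _ h) U) (pickMinBy (lab U) _ h)
    else []

lemma chainPath_succ_pos {n : ℕ} {U : Λ → Option ℕ} {x : Λ}
    (h : ((shape U).filter fun y => x ⋖ y).Nonempty) :
    chainPath (n+1) U x =
      pickMinBy (lab U) _ h ::
        chainPath n (swapTab x (pickMinBy (lab U) _ h) U) (pickMinBy (lab U) _ h) := by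
  simp only [chainPath, dif_pos h]

lemma chainPath_succ_neg {n : ℕ} {U : Λ → Option ℕ} {x : Λ}
    (h : ¬ ((shape U).filter fun y => x ⋖ y).Nonempty) :
    chainPath (n+1) U x = [] := by
  simp only [chainPath, dif_neg h]

lemma slideAux_eq (n : ℕ) (U : Λ → Option ℕ) (x : Λ) :
    slideAux n U x = applyPath x (chainPath n U x) U := by
  induction n generalizing U x with
  | zero => rfl
  | succ n ih =>
    by_cases h : ((shape U).filter fun y => x ⋖ y).Nonempty
    · rw [chainPath_succ_pos h]
      show slideAux (n+1) U x = applyPath _ _ (swapTab x _ U)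
      simp only [slideAux, dif_pos h]
      exact ih _ _
    · rw [chainPath_succ_neg h]
      simp only [slideAux, dif_neg h]
      rfl

lemma revSlideAux_succ_pos {n : ℕ} {U : Λ → Option ℕ} {x : Λ}
    (h : ((shape U).filter fun y => y ⋖ x).Nonempty) :
    revSlideAux (n+1) U x =
      revSlideAux n (swapTab x (pickMaxBy (lab U) _ h) U) (pickMaxBy (lab U) _ h) := by
  simp only [revSlideAux, dif_pos h]
  rfl

lemma revSlideAux_stop {U : Λ → Option ℕ} {x : Λ}
    (h : ∀ a ∈ shape U, ¬ a ⋖ x) (n : ℕ) : revSlideAux n U x = U := by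
  cases n with
  | zero => rfl
  | succ n =>
    have : ¬ ((shape U).filter fun y => y ⋖ x).Nonempty := by
      rintro ⟨y, hyf⟩
      rw [Finset.mem_filter] at hyf
      exact h y hyf.1 hyf.2
    simp only [revSlideAux, dif_neg this]

/-- Hypotheses under which a slide into the vacancy `v` behaves well. -/
structure SlideOK (U : Λ → Option ℕ) (v : Λ) : Prop where
  inc : Inc U
  inj : Inj U
  vac : U v = none
  conv : ∀ b c : Λ, v < b → b ≤ c → c ∈ shape U → b ∈ shape U

namespace SlideOK

variable {U : Λ → Option ℕ} {v : Λ}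

lemma not_mem (H : SlideOK U v) : v ∉ shape U := not_mem_shape.2 H.vac

/-- All the facts about one slide move. -/
lemma step (H : SlideOK U v) (h : ((shape U).filter fun y => v ⋖ y).Nonempty) :
    (pickMinBy (lab U) _ h) ∈ shape U ∧ v ⋖ (pickMinBy (lab U) _ h) ∧
      SlideOK (swapTab v (pickMinBy (lab U) _ h) U) (pickMinBy (lab U) _ h) := by
  set y := pickMinBy (lab U) _ h with hy
  have hmem := pickMinBy_mem (lab U) _ h
  rw [Finset.mem_filter] at hmem
  obtain ⟨hyU, hcov⟩ := hmem
  have hvy : v ≠ y := fun e => H.not_mem (e ▸ hyU)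
  have hshape : shape (swapTab v y U) = insert v (shape U) \ {y} :=
    shape_swapTab H.vac hyU
  have hmem' : ∀ z, z ∈ shape (swapTab v y U) ↔ (z = v ∨ (z ∈ shape U ∧ z ≠ y)) := by
    intro z
    rw [hshape]
    simp only [Finset.mem_sdiff, Finset.mem_insert, Finset.mem_singleton]
    constructor
    · rintro ⟨h1 | h1, h2⟩
      · exact Or.inl h1
      · exact Or.inr ⟨h1, h2⟩
    · rintro (rfl | ⟨h1, h2⟩)
      · exact ⟨Or.inl rfl, hvy⟩
      · exact ⟨Or.inr h1, h2⟩
  have hlab : ∀ z, z ≠ v → z ≠ y → lab (swapTab v y U) z = lab U z := by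
    intro z h1 h2; simp [lab, swapTab, h1, h2]
  have hlabv : lab (swapTab v y U) v = lab U y := by simp [lab, swapTab]
  -- key minimality fact: any z ∈ shape U with v < z has lab U y ≤ lab U z,
  -- strict if z ≠ y
  have hmin : ∀ z ∈ shape U, v < z → z ≠ y → lab U y < lab U z := by
    intro z hz hvz hzy
    obtain ⟨c, hc1, hc2⟩ := exists_covBy_le hvz
    have hcU : c ∈ shape U := H.conv c z hc1.1 hc2 hz
    have hle : lab U y ≤ lab U c := pickMinBy_le _ _ h c (by
      rw [Finset.mem_filter]; exact ⟨hcU, hc1⟩)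
    rcases lt_or_eq_of_le hc2 with hlt | heq
    · exact lt_of_le_of_lt hle (H.inc c z hcU hz hlt)
    · subst heq
      exact lt_of_le_of_ne hle (fun e => hzy (H.inj y c hyU hz e).symm)
  refine ⟨hyU, hcov, ?_, ?_, ?_, ?_⟩
  · -- Inc
    intro a b ha hb hab
    rcases (hmem' a).1 ha with rfl | ⟨haU, hay⟩
    · -- a = v
      rcases (hmem' b).1 hb with rfl | ⟨hbU, hby⟩
      · exact absurd hab (lt_irrefl _)
      · rw [hlabv, hlab b (fun e => absurd (e ▸ hab) (lt_irrefl _)) hby]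
        exact hmin b hbU hab hby
    · rcases (hmem' b).1 hb with rfl | ⟨hbU, hby⟩
      · -- b = v
        rw [hlabv, hlab a (fun e => absurd (e ▸ hab) (lt_irrefl _)) hay]
        exact H.inc a y haU hyU (lt_trans hab hcov.1)
      · rw [hlab a (fun e => H.not_mem (e ▸ haU)) hay,
          hlab b (fun e => H.not_mem (e ▸ hbU)) hby]
        exact H.inc a b haU hbU hab
  · -- Inj
    intro a b ha hb hl
    rcases (hmem' a).1 ha with rfl | ⟨haU, hay⟩
    · rcases (hmem' b).1 hb with rfl | ⟨hbU, hby⟩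
      · rfl
      · rw [hlabv, hlab b (fun e => H.not_mem (e ▸ hbU)) hby] at hl
        exact absurd (H.inj y b hyU hbU hl) (Ne.symm hby)
    · rcases (hmem' b).1 hb with rfl | ⟨hbU, hby⟩
      · rw [hlabv, hlab a (fun e => H.not_mem (e ▸ haU)) hay] at hl
        exact absurd (H.inj a y haU hyU hl) hay
      · rw [hlab a (fun e => H.not_mem (e ▸ haU)) hay,
          hlab b (fun e => H.not_mem (e ▸ hbU)) hby] at hl
        exact H.inj a b haU hbU hl
  · -- vac
    simp [swapTab, Ne.symm hvy]
  · -- conv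
    intro b c hb hbc hc
    rcases (hmem' c).1 hc with rfl | ⟨hcU, hcy⟩
    · exact absurd (lt_of_lt_of_le (lt_trans hcov.1 hb) hbc) (lt_irrefl _)
    · have hbU : b ∈ shape U := H.conv b c (lt_trans hcov.1 hb) hbc hcU
      exact (hmem' b).2 (Or.inr ⟨hbU, fun e => absurd (e ▸ hb) (lt_irrefl _)⟩)

end SlideOK

lemma getLastD_mem {p : List Λ} (h : p ≠ []) (v : Λ) : p.getLastD v ∈ p := by
  induction p generalizing v with
  | nil => exact absurd rfl h
  | cons y p ih =>
    rw [List.getLastD_cons]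
    rcases eq_or_ne p [] with rfl | hne
    · simp
    · exact List.mem_cons_of_mem _ (ih hne y)

lemma chainPath_mem : ∀ {k : ℕ} {U : Λ → Option ℕ} {v : Λ}, U v = none →
    ∀ z ∈ chainPath k U v, z ∈ shape U ∧ v < z := by
  intro k
  induction k with
  | zero => intro U v _ z hz; simp [chainPath] at hz
  | succ k ih =>
    intro U v hv z hz
    by_cases h : ((shape U).filter fun y => v ⋖ y).Nonempty
    · rw [chainPath_succ_pos h] at hz
      set y := pickMinBy (lab U) _ h with hy
      have hmem := pickMinBy_mem (lab U) _ h
      rw [Finset.mem_filter] at hmem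
      have hvy : v ≠ y := fun e =>
        not_mem_shape.2 hv (by rw [e, hy]; exact hmem.1)
      rcases List.mem_cons.1 hz with rfl | hz'
      · exact ⟨hmem.1, hmem.2.1⟩
      · have hU1 : (swapTab v y U) y = none := by simp [swapTab, Ne.symm hvy]
        obtain ⟨hz1, hz2⟩ := ih hU1 z hz'
        rw [shape_swapTab hv hmem.1, Finset.mem_sdiff, Finset.mem_insert] at hz1
        have hzv : z ≠ v := fun e => absurd (e ▸ (hmem.2.1.trans hz2)) (lt_irrefl v)
        rcases hz1.1 with rfl | hz1'
        · exact absurd rfl hzv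
        · exact ⟨hz1', hmem.2.1.trans hz2⟩
    · rw [chainPath_succ_neg h] at hz; simp at hz

lemma chainPath_sorted : ∀ {k : ℕ} {U : Λ → Option ℕ} {v : Λ}, U v = none →
    List.Pairwise (· < ·) (chainPath k U v) := by
  intro k
  induction k with
  | zero => intro U v _; simp [chainPath]
  | succ k ih =>
    intro U v hv
    by_cases h : ((shape U).filter fun y => v ⋖ y).Nonempty
    · rw [chainPath_succ_pos h]
      set y := pickMinBy (lab U) _ h with hy
      have hmem := pickMinBy_mem (lab U) _ h
      rw [Finset.mem_filter] at hmem
      have hvy : v ≠ y := fun e =>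
        not_mem_shape.2 hv (by rw [e, hy]; exact hmem.1)
      have hU1 : (swapTab v y U) y = none := by simp [swapTab, Ne.symm hvy]
      exact List.pairwise_cons.2 ⟨fun z hz => (chainPath_mem hU1 z hz).2, ih hU1⟩
    · rw [chainPath_succ_neg h]; simp

lemma chainPath_length_le {k : ℕ} {U : Λ → Option ℕ} {v : Λ} (hv : U v = none) :
    (chainPath k U v).length ≤ (shape U).card := by
  classical
  have hnd : (chainPath k U v).Nodup := (chainPath_sorted hv).nodup
  rw [← List.toFinset_card_of_nodup hnd]
  exact Finset.card_le_card (fun z hz =>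
    (chainPath_mem hv z (List.mem_toFinset.1 hz)).1)

lemma chainPath_length_lt {k : ℕ} {U : Λ → Option ℕ} {v : Λ} (hv : U v = none) :
    (chainPath k U v).length < Fintype.card Λ := by
  have h1 : (shape U).card < Fintype.card Λ := by
    have : insert v (shape U) ⊆ Finset.univ := Finset.subset_univ _
    have h2 := Finset.card_le_card this
    rw [Finset.card_insert_of_notMem (not_mem_shape.2 hv), Finset.card_univ] at h2
    omega
  exact lt_of_le_of_lt (chainPath_length_le hv) h1

lemma chainPath_term : ∀ {k : ℕ} {U : Λ → Option ℕ} {v : Λ}, U v = none →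
    (chainPath k U v).length < k →
    ∀ w ∈ shape (applyPath v (chainPath k U v) U), ¬ ((chainPath k U v).getLastD v) ⋖ w := by
  intro k
  induction k with
  | zero => intro U v _ hk; omega
  | succ k ih =>
    intro U v hv hk
    by_cases h : ((shape U).filter fun y => v ⋖ y).Nonempty
    · rw [chainPath_succ_pos h] at hk ⊢
      set y := pickMinBy (lab U) _ h with hy
      have hmem := pickMinBy_mem (lab U) _ h
      rw [Finset.mem_filter] at hmem
      have hvy : v ≠ y := fun e =>
        not_mem_shape.2 hv (by rw [e, hy]; exact hmem.1)
      have hU1 : (swapTab v y U) y = none := by simp [swapTab, Ne.symm hvy]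
      intro w hw
      rw [List.getLastD_cons]
      have hk' : (chainPath k (swapTab v y U) y).length < k := by
        simp only [List.length_cons] at hk; omega
      exact ih hU1 hk' w hw
    · rw [chainPath_succ_neg h]
      intro w hw hcov
      simp only [applyPath] at hw
      exact h ⟨w, Finset.mem_filter.2 ⟨hw, by simpa using hcov⟩⟩

lemma shape_applyPath : ∀ {k : ℕ} {U : Λ → Option ℕ} {v : Λ}, U v = none →
    chainPath k U v ≠ [] →
    shape (applyPath v (chainPath k U v) U)
      = insert v (shape U) \ {(chainPath k U v).getLastD v} := by
  intro k
  induction k with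
  | zero => intro U v _ hne; exact absurd rfl hne
  | succ k ih =>
    intro U v hv hne
    by_cases h : ((shape U).filter fun y => v ⋖ y).Nonempty
    · rw [chainPath_succ_pos h]
      set y := pickMinBy (lab U) _ h with hy
      have hmem := pickMinBy_mem (lab U) _ h
      rw [Finset.mem_filter] at hmem
      have hvy : v ≠ y := fun e =>
        not_mem_shape.2 hv (by rw [e, hy]; exact hmem.1)
      have hU1 : (swapTab v y U) y = none := by simp [swapTab, Ne.symm hvy]
      rcases eq_or_ne (chainPath k (swapTab v y U) y) [] with hnil | hnil
      · show shape (applyPath y (chainPath k (swapTab v y U) y) (swapTab v y U)) = _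
        rw [hnil]
        show shape (swapTab v y U) = _
        rw [shape_swapTab hv hmem.1, List.getLastD_cons, List.getLastD_nil]
      · show shape (applyPath y (chainPath k (swapTab v y U) y) (swapTab v y U)) = _
        rw [ih hU1 hnil, List.getLastD_cons, shape_swapTab hv hmem.1]
        have key : insert y (insert v (shape U) \ {y}) = insert v (shape U) := by
          ext z
          simp only [Finset.mem_insert, Finset.mem_sdiff, Finset.mem_singleton]
          constructor
          · rintro (rfl | ⟨hz, -⟩)
            · exact Or.inr hmem.1
            · exact hz
          · intro hz
            by_cases hzy : z = y
            · exact Or.inl hzy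
            · exact Or.inr ⟨hz, hzy⟩
        rw [key]
    · rw [chainPath_succ_neg h] at hne
      exact absurd rfl hne

lemma slideOK_applyPath : ∀ {k : ℕ} {U : Λ → Option ℕ} {v : Λ}, SlideOK U v →
    Inc (applyPath v (chainPath k U v) U) ∧ Inj (applyPath v (chainPath k U v) U) := by
  intro k
  induction k with
  | zero => intro U v H; exact ⟨H.inc, H.inj⟩
  | succ k ih =>
    intro U v H
    by_cases h : ((shape U).filter fun y => v ⋖ y).Nonempty
    · rw [chainPath_succ_pos h]
      exact ih (H.step h).2.2
    · rw [chainPath_succ_neg h]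
      exact ⟨H.inc, H.inj⟩

lemma LabelSet.swap {U : Λ → Option ℕ} {n : ℕ} {v y : Λ} (h : LabelSet U n)
    (hv : U v = none) (hy : y ∈ shape U) : LabelSet (swapTab v y U) n := by
  have hvy : v ≠ y := fun e => not_mem_shape.2 hv (e ▸ hy)
  have hsh := shape_swapTab hv hy
  refine ⟨?_, ?_, ?_⟩
  · rw [hsh, Finset.card_sdiff_of_subset (by simp [Finset.singleton_subset_iff, hy]),
      Finset.card_insert_of_notMem (not_mem_shape.2 hv), Finset.card_singleton, h.1]
    omega
  · intro i hi1 hi2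
    obtain ⟨x, hx, hxu⟩ := h.2.1 i hi1 hi2
    rcases eq_or_ne x y with rfl | hxy
    · refine ⟨v, by simpa [swapTab] using hx, ?_⟩
      intro z hz
      rcases eq_or_ne z v with rfl | hzv
      · rfl
      · rcases eq_or_ne z x with rfl | hzx
        · simp [swapTab, hzv, hvy] at hz  -- z = y: value none
        · simp only [swapTab, if_neg hzv, if_neg hzx] at hz
          exact absurd (hxu z hz) hzx
    · have hxv : x ≠ v := fun e => by rw [e, hv] at hx; cases hx
      refine ⟨x, by simp only [swapTab, if_neg hxv, if_neg hxy]; exact hx, ?_⟩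
      intro z hz
      rcases eq_or_ne z v with rfl | hzv
      · simp only [swapTab, if_pos rfl] at hz
        exact absurd (hxu y hz) (Ne.symm hxy)
      · rcases eq_or_ne z y with rfl | hzy
        · simp [swapTab, hzv] at hz
        · simp only [swapTab, if_neg hzv, if_neg hzy] at hz
          exact hxu z hz
  · intro z hz
    rw [hsh, Finset.mem_sdiff, Finset.mem_insert, Finset.mem_singleton] at hz
    rcases hz.1 with rfl | hz1
    · have : lab (swapTab z y U) z = lab U y := by simp [lab, swapTab]
      rw [this]
      exact h.2.2 y hy
    · have hzv : z ≠ v := fun e => not_mem_shape.2 hv (e ▸ hz1)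
      have : lab (swapTab v y U) z = lab U z := by
        unfold lab swapTab
        rw [if_neg hzv, if_neg hz.2]
      rw [this]
      exact h.2.2 z hz1

lemma LabelSet.applyPath : ∀ {k : ℕ} {U : Λ → Option ℕ} {v : Λ} {n : ℕ}, LabelSet U n →
    U v = none → LabelSet (applyPath v (chainPath k U v) U) n := by
  intro k
  induction k with
  | zero => intro U v n h _; exact h
  | succ k ih =>
    intro U v n h hv
    by_cases hne : ((shape U).filter fun y => v ⋖ y).Nonempty
    · rw [chainPath_succ_pos hne]
      set y := pickMinBy (lab U) _ hne with hy
      have hmem := pickMinBy_mem (lab U) _ hne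
      rw [Finset.mem_filter] at hmem
      have hvy : v ≠ y := fun e =>
        not_mem_shape.2 hv (by rw [e, hy]; exact hmem.1)
      have hU1 : (swapTab v y U) y = none := by simp [swapTab, Ne.symm hvy]
      exact ih (h.swap hv hmem.1) hU1
    · rw [chainPath_succ_neg hne]
      exact h

lemma rev_applyPath : ∀ {k : ℕ} {n : ℕ} {U : Λ → Option ℕ} {v : Λ}, SlideOK U v →
    (chainPath k U v).length ≤ n →
    revSlideAux n (applyPath v (chainPath k U v) U) ((chainPath k U v).getLastD v)
      = revSlideAux (n - (chainPath k U v).length) U v := by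
  intro k
  induction k with
  | zero =>
    intro n U v _ _
    simp [chainPath, applyPath]
  | succ k ih =>
    intro n U v H hn
    by_cases h : ((shape U).filter fun y => v ⋖ y).Nonempty
    · rw [chainPath_succ_pos h] at hn ⊢
      set y := pickMinBy (lab U) _ h with hy
      obtain ⟨hyU, hcov, H1⟩ := H.step h
      simp only [List.length_cons] at hn
      have hvy : v ≠ y := fun e => H.not_mem (e ▸ hyU)
      rw [List.getLastD_cons]
      show revSlideAux n (applyPath y (chainPath k (swapTab v y U) y) (swapTab v y U))
          ((chainPath k (swapTab v y U) y).getLastD y) = _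
      rw [ih H1 (le_trans (Nat.le_succ _) hn)]
      -- now one reverse step from the vacancy `y` restores `U` with vacancy `v`
      have harith : n - (chainPath k (swapTab v y U) y).length
          = (n - ((chainPath k (swapTab v y U) y).length + 1)) + 1 := by omega
      rw [harith]
      have hvmem : v ∈ (shape (swapTab v y U)).filter fun z => z ⋖ y := by
        rw [Finset.mem_filter]
        constructor
        · rw [mem_shape]
          simp [swapTab, shape_some hyU]; exact mem_shape.1 hyU
        · exact hcov
      have hne2 : ((shape (swapTab v y U)).filter fun z => z ⋖ y).Nonempty := ⟨v, hvmem⟩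
      rw [revSlideAux_succ_pos hne2]
      have hpick : pickMaxBy (lab (swapTab v y U)) _ hne2 = v := by
        set c := pickMaxBy (lab (swapTab v y U)) _ hne2 with hc
        have hcmem := pickMaxBy_mem (lab (swapTab v y U)) _ hne2
        rw [Finset.mem_filter] at hcmem
        by_contra hcv
        have h3 : c ∈ insert v (shape U) \ {y} := by
          rw [← shape_swapTab H.vac hyU]; exact hcmem.1
        rw [Finset.mem_sdiff, Finset.mem_insert, Finset.mem_singleton] at h3
        have hcU : c ∈ shape U ∧ c ≠ y := by
          rcases h3.1 with h1 | h1
          · exact absurd h1 hcv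
          · exact ⟨h1, h3.2⟩
        have hlabc : lab (swapTab v y U) c = lab U c := by
          unfold lab swapTab
          rw [if_neg hcv, if_neg hcU.2]
        have hlabv : lab (swapTab v y U) v = lab U y := by simp [lab, swapTab]
        have hlt : lab U c < lab U y :=
          H.inc c y hcU.1 hyU hcmem.2.1
        have hge := pickMaxBy_ge (lab (swapTab v y U)) _ hne2 v hvmem
        rw [hlabv, ← hc, hlabc] at hge
        omega
      rw [hpick]
      have hswap : swapTab y v (swapTab v y U) = U := by
        funext z
        unfold swapTab
        rcases eq_or_ne z y with rfl | hzy
        · simp [hvy, Ne.symm hvy, shape_some hyU]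
        · rcases eq_or_ne z v with rfl | hzv
          · simp [hzy, H.vac, hvy]
          · simp [hzy, hzv]
      rw [hswap]
      simp only [List.length_cons]
    · rw [chainPath_succ_neg h]
      simp [applyPath]

/-- The invariant maintained along the forward infusion process. -/
structure FwdInv (ν : Finset Λ) (T U V : Λ → Option ℕ) : Prop where
  hIncT : Inc T
  hLT : LabelSet T (shape T).card
  hIdealT : IsLowerIdeal (shape T)
  hIncU : Inc U
  hLU : LabelSet U (shape U).card
  hdisj : Disjoint (shape T) (shape U)
  hIdealTU : IsLowerIdeal (shape T ∪ shape U)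
  hUp : ∀ a ∈ shape U, ∀ b, a ≤ b → b ∈ shape T ∪ shape U → b ∈ shape U
  hsub : shape T ∪ shape U ⊆ ν
  hV : shape V = ν \ (shape T ∪ shape U)
  hIncV : Inc V
  hVlow : ∀ z ∈ shape V, (shape T).card < lab V z
  hVhigh : ∀ z ∈ shape V, lab V z ≤ (shape T).card + (shape V).card
  hVuniq : ∀ i, (shape T).card < i → i ≤ (shape T).card + (shape V).card →
    ∃! z, V z = some i

section Step

variable {ν : Finset Λ} {T U V : Λ → Option ℕ}

lemma lab_maxBox (I : FwdInv ν T U V) (hne : (shape T).Nonempty) :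
    lab T (pickMaxBy (lab T) (shape T) hne) = (shape T).card := by
  have h1 : 1 ≤ (shape T).card := Finset.card_pos.2 hne
  obtain ⟨w, hw, -⟩ := I.hLT.2.1 (shape T).card h1 le_rfl
  have hwmem : w ∈ shape T := mem_shape_of_eq hw
  have h2 := pickMaxBy_ge (lab T) (shape T) hne w hwmem
  rw [lab_eq hw] at h2
  exact le_antisymm (I.hLT.2.2 _ (pickMaxBy_mem _ _ hne)).2 h2

lemma maxBox_max (I : FwdInv ν T U V) (hne : (shape T).Nonempty) :
    ∀ z ∈ shape T, ¬ pickMaxBy (lab T) (shape T) hne < z := by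
  intro z hz hlt
  have := I.hIncT _ z (pickMaxBy_mem _ _ hne) hz hlt
  rw [lab_maxBox I hne] at this
  exact absurd (I.hLT.2.2 z hz).2 (by omega)

lemma maxBox_not_memU (I : FwdInv ν T U V) (hne : (shape T).Nonempty) :
    U (pickMaxBy (lab T) (shape T) hne) = none :=
  not_mem_shape.1 (Finset.disjoint_left.1 I.hdisj (pickMaxBy_mem _ _ hne))

lemma slideOK_of_inv (I : FwdInv ν T U V) (hne : (shape T).Nonempty) :
    SlideOK U (pickMaxBy (lab T) (shape T) hne) := by
  set x := pickMaxBy (lab T) (shape T) hne with hx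
  refine ⟨I.hIncU, I.hLU.inj, maxBox_not_memU I hne, ?_⟩
  intro b c hb hbc hc
  have hbu : b ∈ shape T ∪ shape U :=
    I.hIdealTU c (Finset.mem_union_right _ hc) b hbc
  rcases Finset.mem_union.1 hbu with h1 | h1
  · exact absurd hb (maxBox_max I hne b h1)
  · exact h1

lemma below_maxBox (I : FwdInv ν T U V) (hne : (shape T).Nonempty) :
    ∀ a ∈ shape U, ¬ a ⋖ pickMaxBy (lab T) (shape T) hne := by
  intro a ha hcov
  have hx := pickMaxBy_mem (lab T) (shape T) hne
  have : pickMaxBy (lab T) (shape T) hne ∈ shape U :=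
    I.hUp a ha _ (le_of_lt hcov.1) (Finset.mem_union_left _ hx)
  exact Finset.disjoint_left.1 I.hdisj hx this

lemma revSlide_stop_maxBox (I : FwdInv ν T U V) (hne : (shape T).Nonempty) (n : ℕ) :
    revSlideAux n U (pickMaxBy (lab T) (shape T) hne) = U :=
  revSlideAux_stop (below_maxBox I hne) n

end Step

/-- Delete the entry at `x`. -/
def eraseTab (x : Λ) (T : Λ → Option ℕ) : Λ → Option ℕ := fun z => if z = x then none else T z

/-- Record value `o` at `h`. -/
def recTab (h : Λ) (o : Option ℕ) (V : Λ → Option ℕ) : Λ → Option ℕ :=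
  fun z => if z = h then o else V z

lemma eraseTab_self {x : Λ} {T : Λ → Option ℕ} : eraseTab x T x = none := by
  simp [eraseTab]

lemma eraseTab_ne {x z : Λ} {T : Λ → Option ℕ} (h : z ≠ x) : eraseTab x T z = T z := by
  simp [eraseTab, h]

lemma recTab_self {h : Λ} {o : Option ℕ} {V : Λ → Option ℕ} : recTab h o V h = o := by
  simp [recTab]

lemma recTab_ne {h z : Λ} {o : Option ℕ} {V : Λ → Option ℕ} (hz : z ≠ h) :
    recTab h o V z = V z := by
  simp [recTab, hz]

lemma shape_eraseTab {x : Λ} {T : Λ → Option ℕ} :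
    shape (eraseTab x T) = shape T \ {x} := by
  ext z
  rcases eq_or_ne z x with rfl | hz
  · simp [mem_shape, eraseTab_self]
  · simp [mem_shape, eraseTab_ne hz, hz]

lemma lab_eraseTab {x z : Λ} {T : Λ → Option ℕ} (h : z ≠ x) :
    lab (eraseTab x T) z = lab T z := by
  unfold lab
  rw [eraseTab_ne h]

lemma lab_recTab_ne {h z : Λ} {o : Option ℕ} {V : Λ → Option ℕ} (hz : z ≠ h) :
    lab (recTab h o V) z = lab V z := by
  unfold lab
  rw [recTab_ne hz]

lemma infusionStep_pos (T U V : Λ → Option ℕ) (hne : (shape T).Nonempty) :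
    infusionStep (T, U, V) =
      (eraseTab (pickMaxBy (lab T) (shape T) hne) T,
        slideAux (Fintype.card Λ) U (pickMaxBy (lab T) (shape T) hne),
        recTab (if h2 : (shape U \ shape (slideAux (Fintype.card Λ) U
            (pickMaxBy (lab T) (shape T) hne))).Nonempty then h2.choose
            else pickMaxBy (lab T) (shape T) hne)
          (T (pickMaxBy (lab T) (shape T) hne)) V) := by
  simp only [infusionStep]
  rw [dif_pos hne]
  rfl

lemma infusionStep_neg (T U V : Λ → Option ℕ) (hne : ¬ (shape T).Nonempty) :
    infusionStep (T, U, V) = (T, U, V) := by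
  simp only [infusionStep]
  rw [dif_neg hne]

lemma revinfusionStep_pos (A B W : Λ → Option ℕ) (hne : (shape B).Nonempty) :
    revinfusionStep (A, B, W) =
      (revSlideAux (Fintype.card Λ) A (pickMinBy (lab B) (shape B) hne),
        eraseTab (pickMinBy (lab B) (shape B) hne) B,
        recTab (if h2 : (shape A \ shape (revSlideAux (Fintype.card Λ) A
            (pickMinBy (lab B) (shape B) hne))).Nonempty then h2.choose
            else pickMinBy (lab B) (shape B) hne)
          (B (pickMinBy (lab B) (shape B) hne)) W) := by
  simp only [revinfusionStep]
  rw [dif_pos hne]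
  rfl

lemma revinfusionStep_neg (A B W : Λ → Option ℕ) (hne : ¬ (shape B).Nonempty) :
    revinfusionStep (A, B, W) = (A, B, W) := by
  simp only [revinfusionStep]
  rw [dif_neg hne]

section StepMain

variable {ν : Finset Λ} {T U V : Λ → Option ℕ}

/-- Core invariant-transfer lemma for a single forward step. -/
lemma fwd_step_aux (I : FwdInv ν T U V) (hne : (shape T).Nonempty)
    (U' : Λ → Option ℕ) (hole : Λ)
    (hIncU' : Inc U') (hLU' : LabelSet U' (shape U').card)
    (hholeTU : hole ∈ shape T ∪ shape U)
    (hholemax : ∀ z ∈ shape T ∪ shape U, ¬ hole < z)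
    (hdisj' : Disjoint (shape (eraseTab (pickMaxBy (lab T) (shape T) hne) T)) (shape U'))
    (hunion' : shape (eraseTab (pickMaxBy (lab T) (shape T) hne) T) ∪ shape U'
      = (shape T ∪ shape U) \ {hole})
    (hUp' : ∀ a ∈ shape U', ∀ b, a ≤ b →
        b ∈ (shape T ∪ shape U) \ {hole} → b ∈ shape U') :
    FwdInv ν (eraseTab (pickMaxBy (lab T) (shape T) hne) T) U'
      (recTab hole (T (pickMaxBy (lab T) (shape T) hne)) V) := by
  set x := pickMaxBy (lab T) (shape T) hne with hxdef
  have hxT : x ∈ shape T := pickMaxBy_mem _ _ hne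
  have hTx : T x = some (shape T).card := by
    rw [← lab_maxBox I hne]; exact shape_some hxT
  have hm1 : 1 ≤ (shape T).card := Finset.card_pos.2 hne
  have hmemT' : ∀ z, z ∈ shape (eraseTab x T) ↔ z ∈ shape T ∧ z ≠ x := by
    intro z; rw [shape_eraseTab]; simp
  have hcardT' : (shape (eraseTab x T)).card = (shape T).card - 1 := by
    rw [shape_eraseTab, Finset.card_sdiff_of_subset (by simpa using hxT), Finset.card_singleton]
  have hVhole : V hole = none := by
    apply not_mem_shape.1
    rw [I.hV]
    simp only [Finset.mem_sdiff, not_and, not_not]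
    intro _; exact hholeTU
  have hnotV : hole ∉ shape V := by
    rw [I.hV]
    simp only [Finset.mem_sdiff, not_and, not_not]
    intro _; exact hholeTU
  have hshV' : shape (recTab hole (T x) V) = insert hole (shape V) := by
    ext z
    rcases eq_or_ne z hole with rfl | hz
    · simp [mem_shape, recTab_self, hTx]
    · simp [mem_shape, recTab_ne hz, hz]
  have hlabV'hole : lab (recTab hole (T x) V) hole = (shape T).card := by
    apply lab_eq; rw [recTab_self]; exact hTx
  have hholeν : hole ∈ ν := I.hsub hholeTU
  have hcardV' : (shape (recTab hole (T x) V)).card = (shape V).card + 1 := by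
    rw [hshV', Finset.card_insert_of_notMem hnotV]
  have hmemV : ∀ z ∈ shape V, z ≠ hole := fun z hz e => hnotV (e ▸ hz)
  refine ⟨?_, ⟨rfl, ?_, ?_⟩, ?_, hIncU', hLU', hdisj', ?_,
    (fun a ha b hab hb => hUp' a ha b hab (hunion' ▸ hb)), ?_, ?_, ?_, ?_, ?_, ?_⟩
  · -- Inc T'
    intro a b ha hb hab
    rw [hmemT'] at ha hb
    rw [lab_eraseTab ha.2, lab_eraseTab hb.2]
    exact I.hIncT a b ha.1 hb.1 hab
  · -- labels of T'
    intro i hi1 hi2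
    rw [hcardT'] at hi2
    obtain ⟨w, hw, hwu⟩ := I.hLT.2.1 i hi1 (by omega)
    have hwx : w ≠ x := by
      intro e; rw [e, hTx] at hw
      have : (shape T).card = i := by injection hw
      omega
    refine ⟨w, by show eraseTab x T w = some i; rw [eraseTab_ne hwx]; exact hw, ?_⟩
    intro z hz
    have hzx : z ≠ x := by
      intro e; rw [e] at hz; rw [eraseTab_self] at hz
      cases hz
    rw [eraseTab_ne hzx] at hz
    exact hwu z hz
  · -- label bounds for T'
    intro z hz
    rw [hmemT'] at hz
    rw [lab_eraseTab hz.2, hcardT']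
    have h1 := (I.hLT.2.2 z hz.1)
    have h2 : lab T z ≠ (shape T).card := by
      intro e
      obtain ⟨w, hw, hwu⟩ := I.hLT.2.1 (shape T).card hm1 le_rfl
      have e1 := hwu z (by rw [← e]; exact shape_some hz.1)
      have e2 := hwu x hTx
      exact hz.2 (e1.trans e2.symm)
    omega
  · -- lower ideal T'
    intro a ha y hy
    rw [hmemT'] at ha ⊢
    refine ⟨I.hIdealT a ha.1 y hy, ?_⟩
    intro e
    subst e
    rcases lt_or_eq_of_le hy with h1 | h1
    · exact maxBox_max I hne a ha.1 h1
    · exact ha.2 h1.symm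
  · -- lower ideal of union'
    rw [hunion']
    intro a ha y hy
    rw [Finset.mem_sdiff, Finset.mem_singleton] at ha ⊢
    refine ⟨I.hIdealTU a ha.1 y hy, ?_⟩
    intro e
    subst e
    rcases lt_or_eq_of_le hy with h1 | h1
    · exact hholemax a ha.1 h1
    · exact ha.2 h1.symm
  · -- hsub
    rw [hunion']
    exact le_trans (Finset.sdiff_subset) I.hsub
  · -- hV
    rw [hshV', hunion', I.hV]
    ext z
    simp only [Finset.mem_insert, Finset.mem_sdiff, Finset.mem_singleton]
    constructor
    · rintro (rfl | ⟨h1, h2⟩)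
      · exact ⟨hholeν, fun hz => hz.2 rfl⟩
      · exact ⟨h1, fun hz => h2 hz.1⟩
    · rintro ⟨h1, h2⟩
      by_cases hz : z = hole
      · exact Or.inl hz
      · exact Or.inr ⟨h1, fun hz2 => h2 ⟨hz2, hz⟩⟩
  · -- Inc V'
    intro a b ha hb hab
    rw [hshV', Finset.mem_insert] at ha hb
    rcases hb with rfl | hb
    · rcases ha with rfl | ha
      · exact absurd hab (lt_irrefl _)
      · exfalso
        have haU : a ∈ shape T ∪ shape U := I.hIdealTU b hholeTU a (le_of_lt hab)
        rw [I.hV, Finset.mem_sdiff] at ha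
        exact ha.2 haU
    · rcases ha with rfl | ha
      · rw [hlabV'hole, lab_recTab_ne (hmemV b hb)]
        exact I.hVlow b hb
      · rw [lab_recTab_ne (hmemV a ha), lab_recTab_ne (hmemV b hb)]
        exact I.hIncV a b ha hb hab
  · -- hVlow
    intro z hz
    rw [hshV', Finset.mem_insert] at hz
    rw [hcardT']
    rcases hz with rfl | hz
    · rw [hlabV'hole]; omega
    · rw [lab_recTab_ne (hmemV z hz)]
      have := I.hVlow z hz
      omega
  · -- hVhigh
    intro z hz
    rw [hshV', Finset.mem_insert] at hz
    rw [hcardT', hcardV']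
    rcases hz with rfl | hz
    · rw [hlabV'hole]; omega
    · rw [lab_recTab_ne (hmemV z hz)]
      have := I.hVhigh z hz
      omega
  · -- hVuniq
    intro i hi1 hi2
    rw [hcardT'] at hi1
    rw [hcardT', hcardV'] at hi2
    have him : (shape T).card ≤ i := by omega
    rcases eq_or_lt_of_le him with rfl | hgt
    · -- i = card: the unique box is the hole
      refine ⟨hole, by show recTab hole (T x) V hole = _; rw [recTab_self]; exact hTx, ?_⟩
      intro z hz
      by_contra hzne
      rw [recTab_ne hzne] at hz
      have hzV : z ∈ shape V := mem_shape_of_eq hz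
      have := I.hVlow z hzV
      rw [lab_eq hz] at this
      omega
    · -- i > card: the unique box comes from V
      obtain ⟨z, hz, hzu⟩ := I.hVuniq i hgt (by omega)
      have hzhole : z ≠ hole := fun e => by rw [e, hVhole] at hz; cases hz
      refine ⟨z, by show recTab hole (T x) V z = some i; rw [recTab_ne hzhole]; exact hz, ?_⟩
      intro w hw
      have hwhole : w ≠ hole := by
        intro e; rw [e, recTab_self, hTx] at hw
        have : (shape T).card = i := by injection hw
        omega
      rw [recTab_ne hwhole] at hw
      exact hzu w hw

end StepMain

section StepMain2

variable {ν : Finset Λ} {T U V : Λ → Option ℕ}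

lemma shape_recTab_some {h : Λ} {j : ℕ} {V : Λ → Option ℕ} :
    shape (recTab h (some j) V) = insert h (shape V) := by
  ext z
  rcases eq_or_ne z h with rfl | hz
  · simp [mem_shape, recTab_self]
  · simp [mem_shape, recTab_ne hz, hz]

lemma eraseTab_recTab {h : Λ} {o : Option ℕ} {V : Λ → Option ℕ} (hV : V h = none) :
    eraseTab h (recTab h o V) = V := by
  funext z
  rcases eq_or_ne z h with rfl | hz
  · rw [eraseTab_self, hV]
  · rw [eraseTab_ne hz, recTab_ne hz]

lemma V_none_of_mem_union (I : FwdInv ν T U V) {z : Λ}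
    (hz : z ∈ shape T ∪ shape U) : V z = none := by
  apply not_mem_shape.1
  rw [I.hV]
  simp only [Finset.mem_sdiff, not_and, not_not]
  intro _; exact hz

lemma pickMin_recTab (I : FwdInv ν T U V) (hne : (shape T).Nonempty) {hole : Λ}
    (hholeTU : hole ∈ shape T ∪ shape U)
    (hB : (shape (recTab hole (T (pickMaxBy (lab T) (shape T) hne)) V)).Nonempty) :
    pickMinBy (lab (recTab hole (T (pickMaxBy (lab T) (shape T) hne)) V))
      (shape (recTab hole (T (pickMaxBy (lab T) (shape T) hne)) V)) hB = hole := by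
  set x := pickMaxBy (lab T) (shape T) hne with hxdef
  have hTx : T x = some (shape T).card := by
    rw [← lab_maxBox I hne]; exact shape_some (pickMaxBy_mem _ _ hne)
  have hsh : shape (recTab hole (T x) V) = insert hole (shape V) := by
    rw [hTx]; exact shape_recTab_some
  have hnotV : hole ∉ shape V := by
    rw [I.hV]
    simp only [Finset.mem_sdiff, not_and, not_not]
    intro _; exact hholeTU
  have hlabhole : lab (recTab hole (T x) V) hole = (shape T).card := by
    apply lab_eq; rw [recTab_self]; exact hTx
  set c := pickMinBy (lab (recTab hole (T x) V)) (shape (recTab hole (T x) V)) hB with hc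
  have hcmem := pickMinBy_mem (lab (recTab hole (T x) V)) _ hB
  have hcle := pickMinBy_le (lab (recTab hole (T x) V)) _ hB hole (by
    rw [hsh]; exact Finset.mem_insert_self _ _)
  by_contra hch
  have hcV : c ∈ shape V := by
    have h1 := mem_shape.1 hcmem
    rw [recTab_ne hch] at h1
    exact mem_shape.2 h1
  have h1 : lab (recTab hole (T x) V) c = lab V c := lab_recTab_ne hch
  have h2 := I.hVlow c hcV
  rw [hlabhole, h1] at hcle
  omega

lemma fwd_step (I : FwdInv ν T U V) (hne : (shape T).Nonempty) :
    ∃ hole : Λ,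
      infusionStep (T, U, V) =
        (eraseTab (pickMaxBy (lab T) (shape T) hne) T,
          slideAux (Fintype.card Λ) U (pickMaxBy (lab T) (shape T) hne),
          recTab hole (T (pickMaxBy (lab T) (shape T) hne)) V) ∧
      FwdInv ν (eraseTab (pickMaxBy (lab T) (shape T) hne) T)
        (slideAux (Fintype.card Λ) U (pickMaxBy (lab T) (shape T) hne))
        (recTab hole (T (pickMaxBy (lab T) (shape T) hne)) V) ∧
      ∀ W : Λ → Option ℕ,
        revinfusionStep
          (slideAux (Fintype.card Λ) U (pickMaxBy (lab T) (shape T) hne),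
            recTab hole (T (pickMaxBy (lab T) (shape T) hne)) V, W)
          = (U, V, recTab (pickMaxBy (lab T) (shape T) hne)
              (T (pickMaxBy (lab T) (shape T) hne)) W) := by
  set x := pickMaxBy (lab T) (shape T) hne with hxdef
  have hxT : x ∈ shape T := pickMaxBy_mem _ _ hne
  have hxTU : x ∈ shape T ∪ shape U := Finset.mem_union_left _ hxT
  have hTx : T x = some (shape T).card := by
    rw [← lab_maxBox I hne]; exact shape_some hxT
  have hOK : SlideOK U x := slideOK_of_inv I hne
  have hUx : U x = none := hOK.vac
  have hxU : x ∉ shape U := not_mem_shape.2 hUx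
  have hU'eq : slideAux (Fintype.card Λ) U x
      = applyPath x (chainPath (Fintype.card Λ) U x) U := slideAux_eq _ _ _
  obtain ⟨k, hk⟩ : ∃ k, Fintype.card Λ = k + 1 := by
    have : 0 < Fintype.card Λ := Fintype.card_pos_iff.2 ⟨x⟩
    exact ⟨Fintype.card Λ - 1, by omega⟩
  rcases eq_or_ne (chainPath (Fintype.card Λ) U x) [] with hP | hP
  · -- trivial slide
    have hU'U : slideAux (Fintype.card Λ) U x = U := by rw [hU'eq, hP]; rfl
    have hsd : shape U \ shape (slideAux (Fintype.card Λ) U x) = ∅ := by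
      rw [hU'U]; exact Finset.sdiff_self _
    have h2f : ¬ (shape U \ shape (slideAux (Fintype.card Λ) U x)).Nonempty := by
      rw [hsd]; exact Finset.not_nonempty_empty
    have hnc : ¬ ((shape U).filter fun y => x ⋖ y).Nonempty := by
      intro hcand
      rw [hk, chainPath_succ_pos hcand] at hP
      exact List.cons_ne_nil _ _ hP
    have hholemax : ∀ z ∈ shape T ∪ shape U, ¬ x < z := by
      intro z hz hlt
      rcases Finset.mem_union.1 hz with h1 | h1
      · exact maxBox_max I hne z h1 hlt
      · obtain ⟨c, hc1, hc2⟩ := exists_covBy_le hlt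
        have hcTU : c ∈ shape T ∪ shape U :=
          I.hIdealTU z hz c hc2
        rcases Finset.mem_union.1 hcTU with h3 | h3
        · exact maxBox_max I hne c h3 hc1.1
        · exact hnc ⟨c, Finset.mem_filter.2 ⟨h3, hc1⟩⟩
    have hunion' : shape (eraseTab x T) ∪ shape (slideAux (Fintype.card Λ) U x)
        = (shape T ∪ shape U) \ {x} := by
      rw [hU'U, shape_eraseTab]
      ext z
      simp only [Finset.mem_union, Finset.mem_sdiff, Finset.mem_singleton]
      constructor
      · rintro (⟨h1, h2⟩ | h1)
        · exact ⟨Or.inl h1, h2⟩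
        · exact ⟨Or.inr h1, fun e => hxU (e ▸ h1)⟩
      · rintro ⟨h1 | h1, h2⟩
        · exact Or.inl ⟨h1, h2⟩
        · exact Or.inr h1
    have hdisj' : Disjoint (shape (eraseTab x T)) (shape (slideAux (Fintype.card Λ) U x)) := by
      rw [hU'U, shape_eraseTab]
      exact Finset.disjoint_of_subset_left (Finset.sdiff_subset) I.hdisj
    have hUp' : ∀ a ∈ shape (slideAux (Fintype.card Λ) U x), ∀ b, a ≤ b →
        b ∈ (shape T ∪ shape U) \ {x} → b ∈ shape (slideAux (Fintype.card Λ) U x) := by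
      rw [hU'U]
      intro a ha b hab hb
      rw [Finset.mem_sdiff] at hb
      exact I.hUp a ha b hab hb.1
    have hIncU' : Inc (slideAux (Fintype.card Λ) U x) := by rw [hU'U]; exact I.hIncU
    have hLU' : LabelSet (slideAux (Fintype.card Λ) U x)
        (shape (slideAux (Fintype.card Λ) U x)).card := by rw [hU'U]; exact I.hLU
    have hInv := fwd_step_aux I hne (slideAux (Fintype.card Λ) U x) x
      hIncU' hLU' hxTU hholemax hdisj' hunion' hUp'
    have hhole : (if h2 : (shape U \ shape (slideAux (Fintype.card Λ) U x)).Nonempty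
        then h2.choose else x) = x := dif_neg h2f
    refine ⟨x, ?_, hInv, ?_⟩
    · rw [infusionStep_pos T U V hne, ← hxdef, hhole]
    · -- the reverse step undoes this step
      intro W
      have hBsh : shape (recTab x (T x) V) = insert x (shape V) := by
        rw [hTx]; exact shape_recTab_some
      have hBne : (shape (recTab x (T x) V)).Nonempty :=
        ⟨x, by rw [hBsh]; exact Finset.mem_insert_self _ _⟩
      have hpick := pickMin_recTab I hne hxTU hBne
      rw [revinfusionStep_pos _ _ W hBne, hpick]
      have hrs : revSlideAux (Fintype.card Λ) (slideAux (Fintype.card Λ) U x) x = U := by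
        rw [hU'U]; exact revSlide_stop_maxBox I hne _
      have hVx : V x = none := V_none_of_mem_union I hxTU
      have h2f2 : ¬ (shape (slideAux (Fintype.card Λ) U x) \ shape U).Nonempty := by
        rw [hU'U, Finset.sdiff_self]; exact Finset.not_nonempty_empty
      rw [hrs, eraseTab_recTab hVx, dif_neg h2f2, recTab_self]
  · -- nontrivial slide
    set P := chainPath (Fintype.card Λ) U x with hPdef
    set g := P.getLastD x with hgdef
    obtain ⟨hgU, hxg⟩ := chainPath_mem hUx _ (getLastD_mem hP x)
    have hgx : g ≠ x := ne_of_gt hxg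
    have hgTU : g ∈ shape T ∪ shape U := Finset.mem_union_right _ hgU
    have hshapeU' : shape (slideAux (Fintype.card Λ) U x)
        = insert x (shape U) \ {g} := by
      rw [hU'eq]; exact shape_applyPath hUx hP
    have hsd : shape U \ shape (slideAux (Fintype.card Λ) U x) = {g} := by
      rw [hshapeU']
      ext z
      simp only [Finset.mem_sdiff, Finset.mem_insert, Finset.mem_singleton]
      constructor
      · rintro ⟨h1, h2⟩
        by_contra h3
        exact h2 ⟨Or.inr h1, h3⟩
      · rintro rfl
        exact ⟨hgU, fun h3 => h3.2 rfl⟩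
    have hmemU' : ∀ z, z ∈ shape (slideAux (Fintype.card Λ) U x) ↔
        ((z = x ∨ z ∈ shape U) ∧ z ≠ g) := by
      intro z
      rw [hshapeU']
      simp only [Finset.mem_sdiff, Finset.mem_insert, Finset.mem_singleton]
    have hterm := chainPath_term hUx (chainPath_length_lt hUx)
      (k := Fintype.card Λ) (v := x)
    have hholemax : ∀ z ∈ shape T ∪ shape U, ¬ g < z := by
      intro z hz hlt
      obtain ⟨c, hc1, hc2⟩ := exists_covBy_le hlt
      have hcTU : c ∈ shape T ∪ shape U := I.hIdealTU z hz c hc2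
      have hcU : c ∈ shape U := I.hUp g hgU c (le_of_lt hc1.1) hcTU
      have hcU' : c ∈ shape (applyPath x P U) := by
        rw [← hU'eq, hmemU']
        exact ⟨Or.inr hcU, ne_of_gt hc1.1⟩
      exact hterm c hcU' hc1
    have hunion' : shape (eraseTab x T) ∪ shape (slideAux (Fintype.card Λ) U x)
        = (shape T ∪ shape U) \ {g} := by
      rw [shape_eraseTab, hshapeU']
      ext z
      simp only [Finset.mem_union, Finset.mem_sdiff, Finset.mem_singleton,
        Finset.mem_insert]
      constructor
      · rintro (⟨h1, h2⟩ | ⟨h1 | h1, h2⟩)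
        · exact ⟨Or.inl h1, fun e => Finset.disjoint_left.1 I.hdisj h1 (e ▸ hgU)⟩
        · exact ⟨Or.inl (by rw [h1]; exact hxT), by rw [h1]; exact Ne.symm hgx⟩
        · exact ⟨Or.inr h1, h2⟩
      · rintro ⟨h1 | h1, h2⟩
        · rcases eq_or_ne z x with rfl | hzx
          · exact Or.inr ⟨Or.inl rfl, h2⟩
          · exact Or.inl ⟨h1, hzx⟩
        · exact Or.inr ⟨Or.inr h1, h2⟩
    have hdisj' : Disjoint (shape (eraseTab x T))
        (shape (slideAux (Fintype.card Λ) U x)) := by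
      rw [shape_eraseTab, Finset.disjoint_left]
      intro a ha hb
      rw [Finset.mem_sdiff, Finset.mem_singleton] at ha
      rw [hmemU'] at hb
      rcases hb.1 with rfl | h1
      · exact ha.2 rfl
      · exact Finset.disjoint_left.1 I.hdisj ha.1 h1
    have hUp' : ∀ a ∈ shape (slideAux (Fintype.card Λ) U x), ∀ b, a ≤ b →
        b ∈ (shape T ∪ shape U) \ {g} → b ∈ shape (slideAux (Fintype.card Λ) U x) := by
      intro a ha b hab hb
      rw [Finset.mem_sdiff, Finset.mem_singleton] at hb
      rw [hmemU'] at ha ⊢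
      refine ⟨?_, hb.2⟩
      rcases ha.1 with rfl | h1
      · rcases eq_or_lt_of_le hab with rfl | h2
        · exact Or.inl rfl
        · right
          rcases Finset.mem_union.1 hb.1 with h3 | h3
          · exact absurd h2 (maxBox_max I hne b h3)
          · exact h3
      · exact Or.inr (I.hUp a h1 b hab hb.1)
    have hIncInj := slideOK_applyPath (k := Fintype.card Λ) hOK
    have hIncU' : Inc (slideAux (Fintype.card Λ) U x) := by
      rw [hU'eq]; exact hIncInj.1
    have hcardU' : (shape (slideAux (Fintype.card Λ) U x)).card = (shape U).card := by
      rw [hshapeU', Finset.card_sdiff_of_subset (by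
          simp only [Finset.singleton_subset_iff, Finset.mem_insert]
          exact Or.inr hgU),
        Finset.card_insert_of_notMem hxU, Finset.card_singleton]
      omega
    have hLU' : LabelSet (slideAux (Fintype.card Λ) U x)
        (shape (slideAux (Fintype.card Λ) U x)).card := by
      rw [hcardU']
      have := LabelSet.applyPath (k := Fintype.card Λ) I.hLU hUx
      rw [hU'eq]
      exact this
    have hInv := fwd_step_aux I hne (slideAux (Fintype.card Λ) U x) g
      hIncU' hLU' hgTU hholemax hdisj' hunion' hUp'
    have h2t : (shape U \ shape (slideAux (Fintype.card Λ) U x)).Nonempty := by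
      rw [hsd]; exact ⟨g, Finset.mem_singleton_self g⟩
    have hhole : (if h2 : (shape U \ shape (slideAux (Fintype.card Λ) U x)).Nonempty
        then h2.choose else x) = g := by
      rw [dif_pos h2t]
      exact Finset.mem_singleton.1 ((Finset.ext_iff.1 hsd _).1 h2t.choose_spec)
    refine ⟨g, ?_, hInv, ?_⟩
    · rw [infusionStep_pos T U V hne, ← hxdef, hhole]
    · -- the reverse step undoes this step
      intro W
      have hBsh : shape (recTab g (T x) V) = insert g (shape V) := by
        rw [hTx]; exact shape_recTab_some
      have hBne : (shape (recTab g (T x) V)).Nonempty :=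
        ⟨g, by rw [hBsh]; exact Finset.mem_insert_self _ _⟩
      have hpick := pickMin_recTab I hne hgTU hBne
      rw [revinfusionStep_pos _ _ W hBne, hpick]
      have hrs : revSlideAux (Fintype.card Λ) (slideAux (Fintype.card Λ) U x) g = U := by
        rw [hU'eq]
        have hlen : P.length ≤ Fintype.card Λ := le_of_lt (chainPath_length_lt hUx)
        have := rev_applyPath (k := Fintype.card Λ) (n := Fintype.card Λ) hOK hlen
        rw [← hgdef] at this
        rw [this]
        exact revSlide_stop_maxBox I hne _
      have hVg : V g = none := V_none_of_mem_union I hgTU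
      have hsd2 : shape (slideAux (Fintype.card Λ) U x) \ shape U = {x} := by
        rw [hshapeU']
        ext z
        simp only [Finset.mem_sdiff, Finset.mem_insert, Finset.mem_singleton]
        constructor
        · rintro ⟨⟨h1 | h1, h2⟩, h3⟩
          · exact h1
          · exact absurd h1 h3
        · rintro rfl
          exact ⟨⟨Or.inl rfl, fun e => hgx e.symm⟩, hxU⟩
      have h2t2 : (shape (slideAux (Fintype.card Λ) U x) \ shape U).Nonempty := by
        rw [hsd2]; exact ⟨x, Finset.mem_singleton_self x⟩
      rw [hrs, eraseTab_recTab hVg, dif_pos h2t2]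
      have h3 := Finset.mem_singleton.1 ((Finset.ext_iff.1 hsd2 _).1 h2t2.choose_spec)
      rw [h3, recTab_self]
end StepMain2

section Roundtrip

variable {ν : Finset Λ}

lemma roundtrip : ∀ (j : ℕ) (T U V W : Λ → Option ℕ), FwdInv ν T U V →
    j ≤ (shape T).card →
    shape ((infusionStep^[j] (T, U, V)).1) ⊆ shape T ∧
    (shape ((infusionStep^[j] (T, U, V)).1)).card = (shape T).card - j ∧
    FwdInv ν (infusionStep^[j] (T, U, V)).1 (infusionStep^[j] (T, U, V)).2.1
      (infusionStep^[j] (T, U, V)).2.2 ∧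
    revinfusionStep^[j] ((infusionStep^[j] (T, U, V)).2.1,
        (infusionStep^[j] (T, U, V)).2.2, W)
      = (U, V, fun z => if z ∈ shape T \ shape ((infusionStep^[j] (T, U, V)).1)
          then T z else W z) := by
  intro j
  induction j with
  | zero =>
    intro T U V W I hj
    simp only [Function.iterate_zero_apply]
    refine ⟨subset_rfl, by omega, I, ?_⟩
    have h1 : (fun z => if z ∈ shape T \ shape T then T z else W z) = W := by
      funext z
      rw [Finset.sdiff_self]
      simp
    exact (congrArg (fun f => (U, V, f)) h1).symm
  | succ j ih =>
    intro T U V W I hj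
    have hne : (shape T).Nonempty := Finset.card_pos.1 (by omega)
    obtain ⟨hole, hstep, hInv', hrev⟩ := fwd_step I hne
    set x := pickMaxBy (lab T) (shape T) hne with hxdef
    have hx : x ∈ shape T := pickMaxBy_mem _ _ hne
    have hshT' : shape (eraseTab x T) = shape T \ {x} := shape_eraseTab
    have hcard' : (shape (eraseTab x T)).card = (shape T).card - 1 := by
      rw [hshT', Finset.card_sdiff_of_subset (by simpa using hx), Finset.card_singleton]
    have hstep1 : infusionStep^[j+1] (T, U, V)
        = infusionStep^[j] (eraseTab x T, slideAux (Fintype.card Λ) U x,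
            recTab hole (T x) V) := by
      rw [Function.iterate_succ_apply, hstep]
    obtain ⟨hsub', hcard'', hInv'', hrev''⟩ :=
      ih (eraseTab x T) (slideAux (Fintype.card Λ) U x) (recTab hole (T x) V) W
        hInv' (by omega)
    refine ⟨?_, ?_, ?_, ?_⟩
    · rw [hstep1]
      exact hsub'.trans (by rw [hshT']; exact Finset.sdiff_subset)
    · rw [hstep1, hcard'', hcard']
      omega
    · rw [hstep1]
      exact hInv''
    · rw [hstep1, Function.iterate_succ_apply', hrev'', hrev]
      have hxnot : x ∉ shape ((infusionStep^[j] (eraseTab x T,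
          slideAux (Fintype.card Λ) U x, recTab hole (T x) V)).1) := by
        intro hmem
        have := hsub' hmem
        rw [hshT', Finset.mem_sdiff, Finset.mem_singleton] at this
        exact this.2 rfl
      have hfun : recTab x (T x)
          (fun z => if z ∈ shape (eraseTab x T) \ shape ((infusionStep^[j]
              (eraseTab x T, slideAux (Fintype.card Λ) U x, recTab hole (T x) V)).1)
            then eraseTab x T z else W z)
          = fun z => if z ∈ shape T \ shape ((infusionStep^[j]
              (eraseTab x T, slideAux (Fintype.card Λ) U x, recTab hole (T x) V)).1)
            then T z else W z := by
        funext z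
        rcases eq_or_ne z x with rfl | hz
        · rw [recTab_self, if_pos (Finset.mem_sdiff.2 ⟨hx, hxnot⟩)]
        · rw [recTab_ne hz]
          have hiff : z ∈ shape (eraseTab x T) \ shape ((infusionStep^[j]
              (eraseTab x T, slideAux (Fintype.card Λ) U x, recTab hole (T x) V)).1)
              ↔ z ∈ shape T \ shape ((infusionStep^[j]
              (eraseTab x T, slideAux (Fintype.card Λ) U x, recTab hole (T x) V)).1) := by
            rw [hshT']
            simp only [Finset.mem_sdiff, Finset.mem_singleton]
            constructor
            · rintro ⟨⟨h1, -⟩, h2⟩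
              exact ⟨h1, h2⟩
            · rintro ⟨h1, h2⟩
              exact ⟨⟨h1, hz⟩, h2⟩
          rw [if_congr hiff (eraseTab_ne hz) rfl]
      rw [hfun]

end Roundtrip

section Assembly

lemma shape_none : shape (fun _ => (none : Option ℕ) : Λ → Option ℕ) = ∅ := by
  ext z; simp [mem_shape]

lemma inc_of_standard {A : Λ → Option ℕ} (hA : IsStandard A) : Inc A := by
  intro a b ha hb hab
  exact hA.2.2.2 a b ha hb hab _ _ (shape_some ha) (shape_some hb)

lemma labelSet_of_standard {A : Λ → Option ℕ} (hA : IsStandard A) :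
    LabelSet A (shape A).card := by
  refine ⟨rfl, hA.2.1, ?_⟩
  intro z hz
  obtain ⟨i, hi, h1, h2⟩ := hA.2.2.1 z hz
  rw [lab_eq hi]
  exact ⟨h1, h2⟩

lemma isStandard_of {A : Λ → Option ℕ} (hInc : Inc A) (hL : LabelSet A (shape A).card)
    (lam : Finset Λ) (h1 : IsLowerIdeal lam) (h2 : Disjoint lam (shape A))
    (h3 : IsLowerIdeal (lam ∪ shape A)) : IsStandard A := by
  refine ⟨⟨lam, h1, h2, h3⟩, hL.2.1, ?_, ?_⟩
  · intro x hx
    exact ⟨lab A x, shape_some hx, (hL.2.2 x hx).1, (hL.2.2 x hx).2⟩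
  · intro x y hx hy hxy i j hi hj
    rw [← lab_eq hi, ← lab_eq hj]
    exact hInc x y hx hy hxy

lemma fwdInv_init {A B : Λ → Option ℕ} (hA : IsStandard A) (hB : IsStandard B)
    (hstraight : IsLowerIdeal (shape A)) (hext : ShapeExtends (shape B) (shape A)) :
    FwdInv (shape A ∪ shape B) A B (fun _ => none) := by
  refine ⟨inc_of_standard hA, labelSet_of_standard hA, hstraight,
    inc_of_standard hB, labelSet_of_standard hB, hext.1, hext.2.1,
    (fun a ha b hab hb => hext.2.2.2 a ha b hb hab), subset_rfl, ?_, ?_, ?_, ?_, ?_⟩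
  · rw [shape_none, Finset.sdiff_self]
  · intro a b ha
    rw [shape_none] at ha
    exact absurd ha (Finset.notMem_empty a)
  · intro z hz
    rw [shape_none] at hz
    exact absurd hz (Finset.notMem_empty z)
  · intro z hz
    rw [shape_none] at hz
    exact absurd hz (Finset.notMem_empty z)
  · intro i hi1 hi2
    rw [shape_none, Finset.card_empty] at hi2
    omega

lemma infusion_spec {ν : Finset Λ} {T U : Λ → Option ℕ}
    (I : FwdInv ν T U (fun _ => none)) :
    infusion T U = ((infusionStep^[(shape T).card] (T, U, fun _ => none)).2.1,
        (infusionStep^[(shape T).card] (T, U, fun _ => none)).2.2) ∧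
    shape ((infusionStep^[(shape T).card] (T, U, fun _ => none)).1) = ∅ ∧
    FwdInv ν (infusionStep^[(shape T).card] (T, U, fun _ => none)).1
      (infusionStep^[(shape T).card] (T, U, fun _ => none)).2.1
      (infusionStep^[(shape T).card] (T, U, fun _ => none)).2.2 := by
  have hm : (shape T).card ≤ Fintype.card Λ := by
    rw [← Finset.card_univ]
    exact Finset.card_le_card (Finset.subset_univ _)
  obtain ⟨hsub, hcard0, hInvm, -⟩ :=
    roundtrip (shape T).card T U (fun _ => none) (fun _ => none) I le_rfl
  have hTm : shape ((infusionStep^[(shape T).card] (T, U, fun _ => none)).1) = ∅ :=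
    Finset.card_eq_zero.1 (by rw [hcard0]; omega)
  have hfix : infusionStep (infusionStep^[(shape T).card] (T, U, fun _ => none))
      = infusionStep^[(shape T).card] (T, U, fun _ => none) := by
    exact infusionStep_neg _ _ _ (by rw [hTm]; exact Finset.not_nonempty_empty)
  have hiter : infusionStep^[Fintype.card Λ] (T, U, (fun _ => none : Λ → Option ℕ))
      = infusionStep^[(shape T).card] (T, U, fun _ => none) := by
    rw [(by omega : Fintype.card Λ = (Fintype.card Λ - (shape T).card) + (shape T).card),
      Function.iterate_add_apply,
      Function.iterate_fixed hfix]
  refine ⟨?_, hTm, hInvm⟩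
  simp only [infusion]
  rw [hiter]

lemma part1 {ν : Finset Λ} {T U : Λ → Option ℕ}
    (I : FwdInv ν T U (fun _ => none)) :
    revinfusion (infusion T U).1 (infusion T U).2 = (T, U) := by
  have hm : (shape T).card ≤ Fintype.card Λ := by
    rw [← Finset.card_univ]
    exact Finset.card_le_card (Finset.subset_univ _)
  obtain ⟨hsub, hcard0, hInvm, hrevm⟩ :=
    roundtrip (shape T).card T U (fun _ => none) (fun _ => none) I le_rfl
  obtain ⟨hinf, hTm, -⟩ := infusion_spec I
  have hWm : (fun z => if z ∈ shape T \
      shape ((infusionStep^[(shape T).card] (T, U, fun _ => none)).1)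
      then T z else (fun _ => (none : Option ℕ)) z) = T := by
    funext z
    rw [hTm, Finset.sdiff_empty]
    by_cases hz : z ∈ shape T
    · rw [if_pos hz]
    · rw [if_neg hz]
      exact (not_mem_shape.1 hz).symm
  have hrevm' : revinfusionStep^[(shape T).card]
      ((infusionStep^[(shape T).card] (T, U, fun _ => none)).2.1,
        (infusionStep^[(shape T).card] (T, U, fun _ => none)).2.2, fun _ => none)
      = (U, fun _ => none, T) := by
    rw [hrevm, hWm]
  have hfix2 : revinfusionStep (U, (fun _ => (none : Option ℕ) : Λ → Option ℕ), T)
      = (U, fun _ => none, T) :=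
    revinfusionStep_neg _ _ _ (by rw [shape_none]; exact Finset.not_nonempty_empty)
  have hiter2 : revinfusionStep^[Fintype.card Λ]
      ((infusionStep^[(shape T).card] (T, U, fun _ => none)).2.1,
        (infusionStep^[(shape T).card] (T, U, fun _ => none)).2.2, fun _ => none)
      = (U, fun _ => none, T) := by
    rw [(by omega : Fintype.card Λ = (Fintype.card Λ - (shape T).card) + (shape T).card),
      Function.iterate_add_apply, hrevm', Function.iterate_fixed hfix2]
  rw [hinf]
  simp only [revinfusion]
  rw [hiter2]

lemma final_state {ν : Finset Λ} {T U V : Λ → Option ℕ} (hν : IsLowerIdeal ν)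
    (I : FwdInv ν T U V) (hT : shape T = ∅) :
    IsStandard U ∧ IsStandard V ∧ IsLowerIdeal (shape U) ∧
    ShapeExtends (shape V) (shape U) ∧ shape U ∪ shape V = ν := by
  have hUnion : shape T ∪ shape U = shape U := by rw [hT, Finset.empty_union]
  have hIdealU : IsLowerIdeal (shape U) := by rw [← hUnion]; exact I.hIdealTU
  have hVset : shape V = ν \ shape U := by rw [I.hV, hUnion]
  have hsubU : shape U ⊆ ν := by
    intro z hz
    exact I.hsub (by rw [hUnion]; exact hz)
  have hUV : shape U ∪ shape V = ν := by
    rw [hVset]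
    exact Finset.union_sdiff_of_subset hsubU
  have hdisjUV : Disjoint (shape U) (shape V) := by
    rw [hVset]
    exact Finset.disjoint_sdiff
  have hIdealUV : IsLowerIdeal (shape U ∪ shape V) := by rw [hUV]; exact hν
  have hcardT : (shape T).card = 0 := by rw [hT]; exact Finset.card_empty
  have hLV : LabelSet V (shape V).card := by
    refine ⟨rfl, ?_, ?_⟩
    · intro i hi1 hi2
      exact I.hVuniq i (by omega) (by omega)
    · intro z hz
      have h1 := I.hVlow z hz
      have h2 := I.hVhigh z hz
      omega
  refine ⟨isStandard_of I.hIncU I.hLU ∅ (fun a ha => absurd ha (Finset.notMem_empty a))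
      (by simp : Disjoint (∅ : Finset Λ) (shape U))
      (by rw [Finset.empty_union]; exact hIdealU),
    isStandard_of I.hIncV hLV (shape U) hIdealU hdisjUV hIdealUV,
    hIdealU, ⟨hdisjUV, hIdealUV, ?_, ?_⟩, hUV⟩
  · intro a ha y hy hya
    exact hIdealU a ha y hya
  · intro a ha y hy hay
    rw [hVset, Finset.mem_sdiff]
    rw [hUV] at hy
    refine ⟨hy, ?_⟩
    intro hyU
    have : a ∈ shape U := hIdealU y hyU a hay
    rw [hVset, Finset.mem_sdiff] at ha
    exact ha.2 this

end Assembly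

section Bijection

def GoodPair (ν : Finset Λ) : Set ((Λ → Option ℕ) × (Λ → Option ℕ)) :=
  {p | IsStandard p.1 ∧ IsStandard p.2 ∧ IsLowerIdeal (shape p.1) ∧
    ShapeExtends (shape p.2) (shape p.1) ∧ shape p.1 ∪ shape p.2 = ν}

lemma infusion_mem_goodPair {ν : Finset Λ} (hν : IsLowerIdeal ν)
    {p : (Λ → Option ℕ) × (Λ → Option ℕ)} (hp : p ∈ GoodPair ν) :
    infusion p.1 p.2 ∈ GoodPair ν := by
  obtain ⟨h1, h2, h3, h4, h5⟩ := hp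
  have I : FwdInv ν p.1 p.2 (fun _ => none) := by
    have := fwdInv_init h1 h2 h3 h4
    rwa [h5] at this
  obtain ⟨hinf, hTm, hInvm⟩ := infusion_spec I
  obtain ⟨hU, hV, hIdeal, hext, huni⟩ := final_state hν hInvm hTm
  rw [hinf]
  exact ⟨hU, hV, hIdeal, hext, huni⟩

lemma goodPair_finite (ν : Finset Λ) : (GoodPair ν).Finite := by
  classical
  let enc : (Λ → Option ℕ) → (Λ → Option (Fin (Fintype.card Λ + 1))) := fun A x =>
    (A x).bind (fun i => if h : i < Fintype.card Λ + 1 then some ⟨i, h⟩ else none)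
  have hrec : ∀ A : Λ → Option ℕ, IsStandard A → ∀ x, A x = ((enc A x).map Fin.val) := by
    intro A hA x
    rcases h : A x with _ | i
    · simp [enc, h]
    · have hx : x ∈ shape A := mem_shape_of_eq h
      obtain ⟨j, hj, hj1, hj2⟩ := hA.2.2.1 x hx
      rw [h] at hj
      have hij : i = j := by injection hj
      subst hij
      have hcard : (shape A).card ≤ Fintype.card Λ := by
        rw [← Finset.card_univ]; exact Finset.card_le_card (Finset.subset_univ _)
      have hlt : i < Fintype.card Λ + 1 := by omega
      simp [enc, h, hlt, Nat.lt_succ_iff.1 hlt]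
  have hfin : ((fun p : (Λ → Option ℕ) × (Λ → Option ℕ) => (enc p.1, enc p.2)) ''
      GoodPair ν).Finite := Set.toFinite _
  apply Set.Finite.of_finite_image hfin
  intro p hp q hq heq
  simp only [Prod.mk.injEq] at heq
  have e1 : p.1 = q.1 := by
    funext x
    rw [hrec p.1 hp.1 x, hrec q.1 hq.1 x, heq.1]
  have e2 : p.2 = q.2 := by
    funext x
    rw [hrec p.2 hp.2.1 x, hrec q.2 hq.2.1 x, heq.2]
  exact Prod.ext e1 e2

lemma part2 {T U : Λ → Option ℕ} (hT : IsStandard T) (hU : IsStandard U)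
    (hstraight : IsLowerIdeal (shape T)) (hext : ShapeExtends (shape U) (shape T)) :
    infusion (revinfusion T U).1 (revinfusion T U).2 = (T, U) := by
  classical
  have hIdealν : IsLowerIdeal (shape T ∪ shape U) := hext.2.1
  have hTU : ((T, U) : (Λ → Option ℕ) × (Λ → Option ℕ)) ∈ GoodPair (shape T ∪ shape U) :=
    ⟨hT, hU, hstraight, hext, rfl⟩
  have hfin := goodPair_finite (Λ := Λ) (shape T ∪ shape U)
  haveI := hfin.to_subtype
  let Φ : ↥(GoodPair (shape T ∪ shape U)) → ↥(GoodPair (shape T ∪ shape U)) := fun p =>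
    ⟨infusion p.1.1 p.1.2, infusion_mem_goodPair hIdealν p.2⟩
  have hrevΦ : ∀ p : ↥(GoodPair (shape T ∪ shape U)),
      revinfusion (Φ p).1.1 (Φ p).1.2 = p.1 := by
    intro p
    have hp := p.2
    have I : FwdInv (shape T ∪ shape U) p.1.1 p.1.2 (fun _ => none) := by
      have := fwdInv_init hp.1 hp.2.1 hp.2.2.1 hp.2.2.2.1
      rwa [hp.2.2.2.2] at this
    exact part1 I
  have hinj : Function.Injective Φ := by
    intro p q hpq
    apply Subtype.ext
    have h1 := hrevΦ p
    have h2 := hrevΦ q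
    rw [hpq] at h1
    rw [← h1, ← h2]
  have hsurj := Finite.injective_iff_surjective.1 hinj
  obtain ⟨s, hs⟩ := hsurj ⟨(T, U), hTU⟩
  have hrev : revinfusion T U = s.1 := by
    have h3 := hrevΦ s
    rw [hs] at h3
    exact h3
  have hs' : infusion s.1.1 s.1.2 = (T, U) := congrArg Subtype.val hs
  rw [hrev]
  exact hs'

end Bijection

end
/-- Infusion and reverse infusion are mutually inverse. -/
theorem infusion_revinfusion_inverse {Λ : Type} [Fintype Λ] [PartialOrder Λ]
    (T U : Λ → Option ℕ) (hT : IsStandard T) (hU : IsStandard U)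
    (hstraight : IsLowerIdeal (shape T))
    (hext : ShapeExtends (shape U) (shape T)) :
    revinfusion (infusion T U).1 (infusion T U).2 = (T, U) ∧
    infusion (revinfusion T U).1 (revinfusion T U).2 = (T, U) := by
  constructor
  · exact part1 (fwdInv_init hT hU hstraight hext)
  · exact part2 hT hU hstraight hext
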